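/- Let g be an optimal solution of the QP f_QP(P_X, ε) and set |g⟩ = Σ_x g_x|x⟩, θ = |g⟩⟨g|, λ = ⟨g|g⟩. Then (θ, λ) is feasible for f_SDP(P_X, ε), hence f_SDP(P_X, ε) ≤ f_QP(P_X, ε). -/

import Mathlib

open Matrix Finset
open scoped ComplexOrder

/-- Outer product `|v⟩⟨v|`. -/
noncomputable def outer {n : Type*} (v : n → ℂ) : Matrix n n ℂ :=
  Matrix.of fun i j => v i * star (v j)

/-- The pinching map `𝒫(θ) = Σ_x |x⟩⟨x| ⟨x|θ|x⟩`. -/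
noncomputable def pinch {d : ℕ} (θ : Matrix (Fin d) (Fin d) ℂ) : Matrix (Fin d) (Fin d) ℂ :=
  Matrix.diagonal fun x => θ x x

/-- The single-system SDP `f_SDP(P_X, ε)`, with `ψ_X = |ψ_X⟩⟨ψ_X|`, `|ψ_X⟩ = Σ_x p_x |x⟩`. -/
noncomputable def fSDP {d : ℕ} (p : Fin d → ℝ) (ε : ℝ) : ℝ :=
  sInf {l : ℝ | 0 ≤ l ∧ ∃ θ : Matrix (Fin d) (Fin d) ℂ,
    ((l : ℂ) • (1 : Matrix (Fin d) (Fin d) ℂ) - θ).PosSemidef ∧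
    ((1 : Matrix (Fin d) (Fin d) ℂ) - pinch θ).PosSemidef ∧
    1 - ε ^ 2 ≤ (((outer fun x => (p x : ℂ)) * θ).trace).re ∧
    θ.PosSemidef}

/-- The quadratic program `f_QP(P_X, ε)` from the paper. -/
noncomputable def fQP {d : ℕ} (p : Fin d → ℝ) (ε : ℝ) : ℝ :=
  sInf {v : ℝ | ∃ g : Fin d → ℝ, (∀ x, 0 ≤ g x ∧ g x ≤ 1) ∧
    Real.sqrt (1 - ε ^ 2) ≤ ∑ x, g x * p x ∧ v = ∑ x, (g x) ^ 2}

lemma outer_mulVec {d : ℕ} (v x : Fin d → ℂ) :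
    (outer v) *ᵥ x = fun i => v i * (star v ⬝ᵥ x) := by
  ext i
  simp [outer, mulVec, dotProduct, Finset.mul_sum, mul_assoc]

lemma outer_quad {d : ℕ} (v x : Fin d → ℂ) :
    star x ⬝ᵥ ((outer v) *ᵥ x) = star (star v ⬝ᵥ x) * (star v ⬝ᵥ x) := by
  rw [outer_mulVec]
  simp only [dotProduct, Pi.star_apply, star_sum, star_mul', star_star, Finset.sum_mul]
  exact Finset.sum_congr rfl fun i _ => by ring

lemma outer_herm {d : ℕ} (v : Fin d → ℂ) : (outer v).IsHermitian := by
  ext i j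
  simp [outer, Matrix.conjTranspose_apply, mul_comm]

lemma outer_psd {d : ℕ} (v : Fin d → ℂ) : (outer v).PosSemidef := by
  refine Matrix.posSemidef_iff_dotProduct_mulVec.mpr ⟨outer_herm v, fun x => ?_⟩
  rw [outer_quad]
  exact star_mul_self_nonneg _

lemma smul_sub_outer_psd {d : ℕ} (g : Fin d → ℝ) :
    (((∑ x, (g x) ^ 2 : ℝ) : ℂ) • (1 : Matrix (Fin d) (Fin d) ℂ)
      - outer (fun x => (g x : ℂ))).PosSemidef := by
  set L : ℝ := ∑ x, (g x) ^ 2 with hL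
  refine Matrix.posSemidef_iff_dotProduct_mulVec.mpr ⟨?_, ?_⟩
  · refine Matrix.IsHermitian.sub ?_ (outer_herm _)
    unfold Matrix.IsHermitian
    rw [Matrix.conjTranspose_smul, Matrix.conjTranspose_one]
    simp
  · intro x
    set c : ℂ := (star fun i => ((g i : ℂ))) ⬝ᵥ x with hc
    have key : star x ⬝ᵥ (((L : ℂ) • (1 : Matrix (Fin d) (Fin d) ℂ)
        - outer (fun i => (g i : ℂ))) *ᵥ x)
        = ((L * ∑ i, Complex.normSq (x i) - Complex.normSq c : ℝ) : ℂ) := by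
      rw [Matrix.sub_mulVec, dotProduct_sub, outer_quad, Matrix.smul_mulVec,
        Matrix.one_mulVec, dotProduct_smul]
      have h1 : star x ⬝ᵥ x = ((∑ i, Complex.normSq (x i) : ℝ) : ℂ) := by
        simp [dotProduct, ← Complex.mul_conj, mul_comm]
      have h2 : star c * c = ((Complex.normSq c : ℝ) : ℂ) := by
        rw [mul_comm]; simpa using Complex.mul_conj c
      rw [h1, h2, smul_eq_mul]
      push_cast
      ring
    rw [key, Complex.zero_le_real]
    -- real Cauchy-Schwarz
    have hcre : c.re = ∑ i, g i * (x i).re := by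
      simp [hc, dotProduct, Complex.re_sum]
    have hcim : c.im = ∑ i, g i * (x i).im := by
      simp [hc, dotProduct, Complex.im_sum]
    have h1 : (∑ i, g i * (x i).re) ^ 2 ≤ (∑ i, (g i) ^ 2) * ∑ i, ((x i).re) ^ 2 :=
      Finset.sum_mul_sq_le_sq_mul_sq _ _ _
    have h2 : (∑ i, g i * (x i).im) ^ 2 ≤ (∑ i, (g i) ^ 2) * ∑ i, ((x i).im) ^ 2 :=
      Finset.sum_mul_sq_le_sq_mul_sq _ _ _
    have hns : Complex.normSq c = (∑ i, g i * (x i).re) ^ 2 + (∑ i, g i * (x i).im) ^ 2 := by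
      rw [Complex.normSq_apply, hcre, hcim]; ring
    have hN : ∑ i, Complex.normSq (x i) = (∑ i, ((x i).re) ^ 2) + ∑ i, ((x i).im) ^ 2 := by
      rw [← Finset.sum_add_distrib]
      exact Finset.sum_congr rfl fun i _ => by rw [Complex.normSq_apply]; ring
    rw [hns, hN, hL]
    nlinarith [h1, h2]

lemma pinch_part {d : ℕ} (g : Fin d → ℝ) (hg01 : ∀ x, 0 ≤ g x ∧ g x ≤ 1) :
    ((1 : Matrix (Fin d) (Fin d) ℂ) - pinch (outer fun x => (g x : ℂ))).PosSemidef := by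
  have : (1 : Matrix (Fin d) (Fin d) ℂ) - pinch (outer fun x => (g x : ℂ))
      = Matrix.diagonal fun x => ((1 - (g x) ^ 2 : ℝ) : ℂ) := by
    rw [pinch, ← Matrix.diagonal_one, Matrix.diagonal_sub]
    congr 1
    ext x
    simp [outer, ← Complex.ofReal_pow]
    push_cast
    ring
  rw [this, Matrix.posSemidef_diagonal_iff]
  intro i
  rw [Complex.zero_le_real]
  nlinarith [(hg01 i).1, (hg01 i).2]

lemma trace_outer_mul_outer {d : ℕ} (p g : Fin d → ℝ) :
    (((outer fun x => (p x : ℂ)) * outer fun x => (g x : ℂ)).trace).re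
      = (∑ x, g x * p x) ^ 2 := by
  have : ((outer fun x => (p x : ℂ)) * outer fun x => (g x : ℂ)).trace
      = (((∑ x, g x * p x) ^ 2 : ℝ) : ℂ) := by
    rw [Matrix.trace]
    simp only [Matrix.diag_apply, Matrix.mul_apply, outer, Matrix.of_apply]
    push_cast
    rw [sq, Finset.sum_mul_sum]
    refine Finset.sum_congr rfl fun i _ => Finset.sum_congr rfl fun j _ => ?_
    simp only [Complex.star_def, Complex.conj_ofReal]
    push_cast
    ring
  rw [this, Complex.ofReal_re]

/-- if `g` is optimal for the QP, then `θ = |g⟩⟨g|`, `λ = ⟨g|g⟩ = Σ_x g_x²`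
is feasible for `f_SDP(P_X, ε)`, and hence `f_SDP(P_X, ε) ≤ f_QP(P_X, ε)`. -/
theorem qp_optimizer_gives_sdp_feasible {d : ℕ} (p : Fin d → ℝ) (hp : ∀ x, 0 ≤ p x)
    (hps : ∑ x, p x = 1) (ε : ℝ) (hε : ε ∈ Set.Ioo (0 : ℝ) 1)
    (g : Fin d → ℝ) (hg01 : ∀ x, 0 ≤ g x ∧ g x ≤ 1)
    (hgfeas : Real.sqrt (1 - ε ^ 2) ≤ ∑ x, g x * p x)
    (hgopt : ∑ x, (g x) ^ 2 = fQP p ε) :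
    (0 ≤ ∑ x, (g x) ^ 2) ∧
    (((↑(∑ x, (g x) ^ 2) : ℂ) • (1 : Matrix (Fin d) (Fin d) ℂ)
        - outer fun x => (g x : ℂ)).PosSemidef) ∧
    ((1 : Matrix (Fin d) (Fin d) ℂ) - pinch (outer fun x => (g x : ℂ))).PosSemidef ∧
    (1 - ε ^ 2 ≤ (((outer fun x => (p x : ℂ)) * outer fun x => (g x : ℂ)).trace).re) ∧
    (outer fun x => (g x : ℂ)).PosSemidef ∧
    fSDP p ε ≤ fQP p ε := by
  obtain ⟨hε0, hε1⟩ := hε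
  have hL0 : (0:ℝ) ≤ ∑ x, (g x) ^ 2 := Finset.sum_nonneg fun x _ => sq_nonneg _
  have h1 := smul_sub_outer_psd g
  have h2 := pinch_part g hg01
  have h3 : 1 - ε ^ 2 ≤ (((outer fun x => (p x : ℂ)) * outer fun x => (g x : ℂ)).trace).re := by
    rw [trace_outer_mul_outer]
    have h0 : 0 ≤ 1 - ε ^ 2 := by nlinarith
    calc 1 - ε ^ 2 = Real.sqrt (1 - ε ^ 2) ^ 2 := (Real.sq_sqrt h0).symm
      _ ≤ (∑ x, g x * p x) ^ 2 := pow_le_pow_left₀ (Real.sqrt_nonneg _) hgfeas 2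
  refine ⟨hL0, h1, h2, h3, outer_psd _, ?_⟩
  rw [← hgopt]
  exact csInf_le ⟨0, fun l hl => hl.1⟩ ⟨hL0, _, h1, h2, h3, outer_psd _⟩
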